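/- Let n be a natural number, let s be the swap map of Fin n ⊕ Fin n interchanging inl x and inr x, and for a colored Brauer n-diagram (M, ℓ) let i(M, ℓ) := (s ∘ M ∘ s, ℓ ∘ s) (which is again a colored Brauer n-diagram). If (M, ℓ) corresponds to the tuple (a, ℓa, b, ℓb, π, w) under the bijection sending (M, ℓ) to (a, ℓa, b, ℓb, π, w) — where a is the involution of Fin n defined by a x = y if M (inl x) = inl y for some y and a x = x otherwise; b is the involution of Fin n defined by b x = y if M (inr x) = inr y for some y and b x = x otherwise; ℓa x = ℓ (inl x) if M (inl x) is a top vertex and ℓa x = 0 otherwise; ℓb x = ℓ (inr x) if M (inr x) is a bottom vertex and ℓb x = 0 otherwise; π sends each fixed point x of a to the unique y with M (inl x) = inr y; and w sends each fixed point x of a to ℓ (inl x) — then i(M, ℓ) corresponds to the tuple (b, ℓb, a, ℓa, π⁻¹, w') where w' y = -w (π⁻¹ y) for each fixed point y of b. -/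

import Mathlib

open Sum

/-- A Brauer `n`-diagram: a fixed-point-free involution of `Fin n ⊕ Fin n`. -/
def IsBrauer {n : ℕ} (M : Fin n ⊕ Fin n → Fin n ⊕ Fin n) : Prop :=
  M ∘ M = id ∧ ∀ x, M x ≠ x

/-- A colored Brauer `n`-diagram: a Brauer diagram together with a labeling
`ℓ : Fin n ⊕ Fin n → ℤ` satisfying `ℓ (M x) = -ℓ x` for all `x`. -/
def IsColoredBrauer {n : ℕ} (M : Fin n ⊕ Fin n → Fin n ⊕ Fin n)
    (ℓ : Fin n ⊕ Fin n → ℤ) : Prop :=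
  IsBrauer M ∧ ∀ x, ℓ (M x) = -ℓ x

/-- The top involution `a`. -/
noncomputable def topInv {n : ℕ} (M : Fin n ⊕ Fin n → Fin n ⊕ Fin n) (x : Fin n) : Fin n :=
  if h : ∃ y, M (inl x) = inl y then h.choose else x

/-- The bottom involution `b`. -/
noncomputable def botInv {n : ℕ} (M : Fin n ⊕ Fin n → Fin n ⊕ Fin n) (x : Fin n) : Fin n :=
  if h : ∃ y, M (inr x) = inr y then h.choose else x

/-- The through-strand map `π`: it sends a fixed point `x` of `a` to the unique `y`
with `M (inl x) = inr y`. -/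
def thru {n : ℕ} (M : Fin n ⊕ Fin n → Fin n ⊕ Fin n) (x : Fin n) : Fin n :=
  match M (inl x) with
  | inl _ => x
  | inr y => y

/-- `ℓa x = ℓ (inl x)` if `M (inl x)` is a top vertex, and `ℓa x = 0` otherwise. -/
def topLab {n : ℕ} (M : Fin n ⊕ Fin n → Fin n ⊕ Fin n) (ℓ : Fin n ⊕ Fin n → ℤ)
    (x : Fin n) : ℤ :=
  if (M (inl x)).isLeft then ℓ (inl x) else 0

/-- `ℓb x = ℓ (inr x)` if `M (inr x)` is a bottom vertex, and `ℓb x = 0` otherwise. -/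
def botLab {n : ℕ} (M : Fin n ⊕ Fin n → Fin n ⊕ Fin n) (ℓ : Fin n ⊕ Fin n → ℤ)
    (x : Fin n) : ℤ :=
  if (M (inr x)).isRight then ℓ (inr x) else 0

/-- `w x = ℓ (inl x)` at each fixed point `x` of `a` (i.e. when `M (inl x)` is a bottom
vertex). -/
def thruLab {n : ℕ} (M : Fin n ⊕ Fin n → Fin n ⊕ Fin n) (ℓ : Fin n ⊕ Fin n → ℤ)
    (x : Fin n) : ℤ :=
  if (M (inl x)).isRight then ℓ (inl x) else 0

/-- If the colored Brauer diagram `(M, ℓ)` corresponds to the tuple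
`(a, ℓa, b, ℓb, π, w)`, then the flipped diagram
`i(M, ℓ) = (swap ∘ M ∘ swap, ℓ ∘ swap)` is again a colored Brauer diagram and
corresponds to the tuple `(b, ℓb, a, ℓa, π⁻¹, w')` where `w' y = -w (π⁻¹ y)` for
each fixed point `y` of `b`. -/

lemma topInv_eq {n : ℕ} (M : Fin n ⊕ Fin n → Fin n ⊕ Fin n) {x y : Fin n}
    (h : M (inl x) = inl y) : topInv M x = y := by
  unfold topInv
  rw [dif_pos ⟨y, h⟩]
  have hs := (⟨y, h⟩ : ∃ z, M (inl x) = inl z).choose_spec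
  exact (inl_injective (h.symm.trans hs)).symm

lemma topInv_eq_self {n : ℕ} (M : Fin n ⊕ Fin n → Fin n ⊕ Fin n) {x y : Fin n}
    (h : M (inl x) = inr y) : topInv M x = x := by
  unfold topInv
  rw [dif_neg]
  rintro ⟨z, hz⟩
  rw [h] at hz
  exact nomatch hz

lemma botInv_eq {n : ℕ} (M : Fin n ⊕ Fin n → Fin n ⊕ Fin n) {x y : Fin n}
    (h : M (inr x) = inr y) : botInv M x = y := by
  unfold botInv
  rw [dif_pos ⟨y, h⟩]
  have hs := (⟨y, h⟩ : ∃ z, M (inr x) = inr z).choose_spec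
  exact (inr_injective (h.symm.trans hs)).symm

lemma botInv_eq_self {n : ℕ} (M : Fin n ⊕ Fin n → Fin n ⊕ Fin n) {x y : Fin n}
    (h : M (inr x) = inl y) : botInv M x = x := by
  unfold botInv
  rw [dif_neg]
  rintro ⟨z, hz⟩
  rw [h] at hz
  exact nomatch hz

theorem stmt12 (n : ℕ) (M : Fin n ⊕ Fin n → Fin n ⊕ Fin n) (ℓ : Fin n ⊕ Fin n → ℤ)
    (hMℓ : IsColoredBrauer M ℓ) :
    IsColoredBrauer (Sum.swap ∘ M ∘ Sum.swap) (ℓ ∘ Sum.swap) ∧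
    topInv (Sum.swap ∘ M ∘ Sum.swap) = botInv M ∧
    botInv (Sum.swap ∘ M ∘ Sum.swap) = topInv M ∧
    topLab (Sum.swap ∘ M ∘ Sum.swap) (ℓ ∘ Sum.swap) = botLab M ℓ ∧
    botLab (Sum.swap ∘ M ∘ Sum.swap) (ℓ ∘ Sum.swap) = topLab M ℓ ∧
    (∀ y : Fin n, botInv M y = y →
      topInv M (thru (Sum.swap ∘ M ∘ Sum.swap) y) = thru (Sum.swap ∘ M ∘ Sum.swap) y ∧
      thru M (thru (Sum.swap ∘ M ∘ Sum.swap) y) = y) ∧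
    (∀ x : Fin n, topInv M x = x →
      thru (Sum.swap ∘ M ∘ Sum.swap) (thru M x) = x) ∧
    (∀ y : Fin n, botInv M y = y →
      thruLab (Sum.swap ∘ M ∘ Sum.swap) (ℓ ∘ Sum.swap) y =
        -thruLab M ℓ (thru (Sum.swap ∘ M ∘ Sum.swap) y)) := by

  obtain ⟨⟨hinv, hfix⟩, hlab⟩ := hMℓ
  have hMM : ∀ x, M (M x) = x := fun x => congrFun hinv x
  refine ⟨⟨⟨?_, ?_⟩, ?_⟩, ?_, ?_, ?_, ?_, ?_, ?_, ?_⟩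
  · funext x
    simp [Function.comp, hMM]
  · intro x hx
    have : M (Sum.swap x) = Sum.swap x := by
      have := congrArg Sum.swap hx
      simpa [Function.comp] using this
    exact hfix _ this
  · intro x
    simp [Function.comp, hlab]
  · funext x
    rcases h : M (inr x) with y | y
    · rw [botInv_eq_self M h, topInv_eq_self (Sum.swap ∘ M ∘ Sum.swap)
        (show (Sum.swap ∘ M ∘ Sum.swap) (inl x) = inr y by simp [Function.comp, h])]
    · rw [botInv_eq M h, topInv_eq (Sum.swap ∘ M ∘ Sum.swap)
        (show (Sum.swap ∘ M ∘ Sum.swap) (inl x) = inl y by simp [Function.comp, h])]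
  · funext x
    rcases h : M (inl x) with y | y
    · rw [topInv_eq M h, botInv_eq (Sum.swap ∘ M ∘ Sum.swap)
        (show (Sum.swap ∘ M ∘ Sum.swap) (inr x) = inr y by simp [Function.comp, h])]
    · rw [topInv_eq_self M h, botInv_eq_self (Sum.swap ∘ M ∘ Sum.swap)
        (show (Sum.swap ∘ M ∘ Sum.swap) (inr x) = inl y by simp [Function.comp, h])]
  · funext x
    rcases h : M (inr x) with y | y <;>
      simp [topLab, botLab, Function.comp, h]
  · funext x
    rcases h : M (inl x) with y | y <;>
      simp [topLab, botLab, Function.comp, h]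
  · intro y hy
    rcases h : M (inr y) with x | x
    · have hx : M (inl x) = inr y := by rw [← h, hMM]
      have ht : thru (Sum.swap ∘ M ∘ Sum.swap) y = x := by
        simp [thru, Function.comp, h]
      rw [ht]
      exact ⟨topInv_eq_self M hx, by simp [thru, hx]⟩
    · rw [botInv_eq M h] at hy
      rw [hy] at h
      exact absurd h (hfix _)
  · intro x hx
    rcases h : M (inl x) with y | y
    · rw [topInv_eq M h] at hx
      rw [hx] at h
      exact absurd h (hfix _)
    · have hy : M (inr y) = inl x := by rw [← h, hMM]
      have ht : thru M x = y := by simp [thru, h]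
      rw [ht]
      simp [thru, Function.comp, hy]
  · intro y hy
    rcases h : M (inr y) with x | x
    · have hx : M (inl x) = inr y := by rw [← h, hMM]
      have ht : thru (Sum.swap ∘ M ∘ Sum.swap) y = x := by
        simp [thru, Function.comp, h]
      rw [ht]
      have := hlab (inl x)
      rw [hx] at this
      simp [thruLab, Function.comp, h, hx, this]
    · rw [botInv_eq M h] at hy
      rw [hy] at h
      exact absurd h (hfix _)
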